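/- arXiv:1912.12790 — 3 statements merged into one kernel-verified Lean document; each statement's English description precedes it below -/
import Mathlib

section
/- Let G=(V,E) be a twinless strongly connected directed graph, and let B₁ and B₂ be two distinct 2-twinless blocks of G. Then |B₁ ∩ B₂| ≤ 1, i.e., B₁ and B₂ share at most one vertex. -/
/-- A directed graph on vertex type `V` is given by its edge relation `E`.
`restrictEdges E S` is the edge relation of the subgraph induced on `S`. -/
def restrictEdges {V : Type*} (E : V → V → Prop) (S : Set V) : V → V → Prop :=
  fun a b => E a b ∧ a ∈ S ∧ b ∈ S

/-- The induced subgraph on `S` is strongly connected: every vertex of `S` reaches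
every vertex of `S` by a directed path staying inside `S`. -/
def StronglyConnectedOn {V : Type*} (E : V → V → Prop) (S : Set V) : Prop :=
  ∀ ⦃x⦄, x ∈ S → ∀ ⦃y⦄, y ∈ S → Relation.ReflTransGen (restrictEdges E S) x y

/-- The induced subgraph on `S` is twinless strongly connected: it has a strongly
connected spanning subgraph (edge set `E'` inside `S`) with no pair of antiparallel
edges (if `(x, y) ∈ E'` then `(y, x) ∉ E'`). -/
def TwinlessSCOn {V : Type*} (E : V → V → Prop) (S : Set V) : Prop :=
  ∃ E' : V → V → Prop,
    (∀ a b, E' a b → E a b ∧ a ∈ S ∧ b ∈ S) ∧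
    (∀ a b, E' a b → ¬ E' b a) ∧
    StronglyConnectedOn E' S

/-- `C` is a strongly connected component of the subgraph induced on `S`:
a maximal subset of `S` whose induced subgraph is strongly connected. -/
def IsSCCWithin {V : Type*} (E : V → V → Prop) (S C : Set V) : Prop :=
  C ⊆ S ∧ StronglyConnectedOn E C ∧
    ∀ D : Set V, C ⊆ D → D ⊆ S → StronglyConnectedOn E D → D = C

/-- `C` is a twinless strongly connected component of the subgraph induced on `S`:
a maximal subset of `S` whose induced subgraph is twinless strongly connected. -/
def IsTSCCWithin {V : Type*} (E : V → V → Prop) (S C : Set V) : Prop :=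
  C ⊆ S ∧ TwinlessSCOn E C ∧
    ∀ D : Set V, C ⊆ D → D ⊆ S → TwinlessSCOn E D → D = C

/-- `x` and `y` lie in the same twinless strongly connected component of the
subgraph induced on `S`. -/
def SameTSCC {V : Type*} (E : V → V → Prop) (S : Set V) (x y : V) : Prop :=
  ∃ C : Set V, IsTSCCWithin E S C ∧ x ∈ C ∧ y ∈ C

/-- `x` and `y` lie in the same strongly connected component of the
subgraph induced on `S`. -/
def SameSCC {V : Type*} (E : V → V → Prop) (S : Set V) (x y : V) : Prop :=
  ∃ C : Set V, IsSCCWithin E S C ∧ x ∈ C ∧ y ∈ C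

/-- The relation `x ≈ y` ("x 2t-related to y"): `x` and `y` are distinct and, for every
vertex `w ∉ {x, y}`, the vertices `x, y` lie in the same twinless strongly connected
component of `G ∖ {w}`. -/
def Rel2t {V : Type*} (E : V → V → Prop) (x y : V) : Prop :=
  x ≠ y ∧ ∀ w : V, w ≠ x → w ≠ y → SameTSCC E (({w} : Set V)ᶜ) x y

/-- `x` and `y` are distinct and, for every vertex `w ∉ {x, y}`, the vertices `x, y`
lie in the same strongly connected component of `G ∖ {w}`. -/
def Rel2s {V : Type*} (E : V → V → Prop) (x y : V) : Prop :=
  x ≠ y ∧ ∀ w : V, w ≠ x → w ≠ y → SameSCC E (({w} : Set V)ᶜ) x y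

/-- A 2-twinless block: a maximal set `B` with `|B| ≥ 2` such that `x ≈ y`
for all distinct `x, y ∈ B`. -/
def Is2TwinlessBlock {V : Type*} (E : V → V → Prop) (B : Set V) : Prop :=
  B.Nontrivial ∧ (∀ ⦃x⦄, x ∈ B → ∀ ⦃y⦄, y ∈ B → x ≠ y → Rel2t E x y) ∧
    ∀ D : Set V, B ⊆ D → (∀ ⦃x⦄, x ∈ D → ∀ ⦃y⦄, y ∈ D → x ≠ y → Rel2t E x y) → D = B

/-- A 2-strong block: a maximal set `B` with `|B| ≥ 2` such that for all distinct
`x, y ∈ B` and every `u ∉ {x, y}`, the vertices `x, y` lie in the same strongly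
connected component of `G ∖ {u}`. -/
def Is2StrongBlock {V : Type*} (E : V → V → Prop) (B : Set V) : Prop :=
  B.Nontrivial ∧ (∀ ⦃x⦄, x ∈ B → ∀ ⦃y⦄, y ∈ B → x ≠ y → Rel2s E x y) ∧
    ∀ D : Set V, B ⊆ D → (∀ ⦃x⦄, x ∈ D → ∀ ⦃y⦄, y ∈ D → x ≠ y → Rel2s E x y) → D = B

/-- A twinless articulation point: a vertex whose removal increases the number of
twinless strongly connected components. -/
def IsTwinlessArticulationPoint {V : Type*} (E : V → V → Prop) (v : V) : Prop :=
  ({C : Set V | IsTSCCWithin E Set.univ C}).ncard <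
    ({C : Set V | IsTSCCWithin E (({v} : Set V)ᶜ) C}).ncard


lemma twinlessSCOn_union {V : Type*} (E : V → V → Prop) {S T : Set V}
    (hS : TwinlessSCOn E S) (hT : TwinlessSCOn E T) {v : V}
    (hvS : v ∈ S) (hvT : v ∈ T) : TwinlessSCOn E (S ∪ T) := by
  obtain ⟨ES, hES, hEStw, hESc⟩ := hS
  obtain ⟨ET, hET, hETtw, hETc⟩ := hT
  refine ⟨fun a b => ES a b ∨ (ET a b ∧ ¬ ES b a), ?_, ?_, ?_⟩
  · rintro a b (h | ⟨h, -⟩)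
    · exact ⟨(hES a b h).1, Or.inl (hES a b h).2.1, Or.inl (hES a b h).2.2⟩
    · exact ⟨(hET a b h).1, Or.inr (hET a b h).2.1, Or.inr (hET a b h).2.2⟩
  · rintro a b (h | ⟨h, hn⟩) (h' | ⟨h', hn'⟩)
    · exact hEStw a b h h'
    · exact hn' h
    · exact hn h'
    · exact hETtw a b h h'
  · -- strong connectivity
    set E' : V → V → Prop := fun a b => ES a b ∨ (ET a b ∧ ¬ ES b a) with hE'
    have monoS : ∀ {x y : V}, Relation.ReflTransGen (restrictEdges ES S) x y →
        Relation.ReflTransGen (restrictEdges E' (S ∪ T)) x y := by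
      intro x y h
      refine Relation.ReflTransGen.mono ?_ x y h
      rintro a b ⟨hab, ha, hb⟩
      exact ⟨Or.inl hab, Or.inl ha, Or.inl hb⟩
    have monoT : ∀ {x y : V}, Relation.ReflTransGen (restrictEdges ET T) x y →
        Relation.ReflTransGen (restrictEdges E' (S ∪ T)) x y := by
      intro x y h
      induction h with
      | refl => exact .refl
      | tail _ hst ih =>
        rename_i b c _
        obtain ⟨hbc, hb, hc⟩ := hst
        by_cases hcb : ES c b
        · have hbS : b ∈ S := (hES c b hcb).2.2
          have hcS : c ∈ S := (hES c b hcb).2.1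
          exact ih.trans (monoS (hESc hbS hcS))
        · exact ih.tail ⟨Or.inr ⟨hbc, hcb⟩, Or.inr hb, Or.inr hc⟩
    have toV : ∀ ⦃x⦄, x ∈ S ∪ T → Relation.ReflTransGen (restrictEdges E' (S ∪ T)) x v := by
      rintro x (hx | hx)
      · exact monoS (hESc hx hvS)
      · exact monoT (hETc hx hvT)
    have fromV : ∀ ⦃y⦄, y ∈ S ∪ T → Relation.ReflTransGen (restrictEdges E' (S ∪ T)) v y := by
      rintro y (hy | hy)
      · exact monoS (hESc hvS hy)
      · exact monoT (hETc hvT hy)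
    intro x hx y hy
    exact (toV hx).trans (fromV hy)

lemma tscc_eq_of_mem {V : Type*} (E : V → V → Prop) {S C₁ C₂ : Set V}
    (h₁ : IsTSCCWithin E S C₁) (h₂ : IsTSCCWithin E S C₂) {v : V}
    (hv₁ : v ∈ C₁) (hv₂ : v ∈ C₂) : C₁ = C₂ := by
  obtain ⟨hC₁S, hC₁t, hC₁m⟩ := h₁
  obtain ⟨hC₂S, hC₂t, hC₂m⟩ := h₂
  have hU : TwinlessSCOn E (C₁ ∪ C₂) := twinlessSCOn_union E hC₁t hC₂t hv₁ hv₂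
  have e₁ : C₁ ∪ C₂ = C₁ := hC₁m _ Set.subset_union_left (Set.union_subset hC₁S hC₂S) hU
  have e₂ : C₁ ∪ C₂ = C₂ := hC₂m _ Set.subset_union_right (Set.union_subset hC₁S hC₂S) hU
  rw [← e₁, e₂]

lemma sameTSCC_trans {V : Type*} (E : V → V → Prop) {S : Set V} {x y z : V}
    (h₁ : SameTSCC E S x y) (h₂ : SameTSCC E S y z) : SameTSCC E S x z := by
  obtain ⟨C₁, hC₁, hx, hy⟩ := h₁
  obtain ⟨C₂, hC₂, hy', hz⟩ := h₂
  exact ⟨C₁, hC₁, hx, (tscc_eq_of_mem E hC₁ hC₂ hy hy') ▸ hz⟩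

/-- Two distinct 2-twinless blocks of a twinless strongly connected directed graph
share at most one vertex. -/
theorem two_twinless_blocks_intersect_in_at_most_one_vertex
    {V : Type*} [Fintype V] (E : V → V → Prop)
    (hG : TwinlessSCOn E Set.univ)
    (B₁ B₂ : Set V) (hB₁ : Is2TwinlessBlock E B₁) (hB₂ : Is2TwinlessBlock E B₂)
    (hne : B₁ ≠ B₂) :
    (B₁ ∩ B₂).ncard ≤ 1 := by
  by_contra hcard
  push_neg at hcard
  obtain ⟨x, y, hx, hy, hxy⟩ := (Set.one_lt_ncard_iff (Set.toFinite _)).1 hcard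
  -- key: for a ∈ B₁, b ∈ B₂ distinct, Rel2t a b
  have key : ∀ ⦃a⦄, a ∈ B₁ ∪ B₂ → ∀ ⦃b⦄, b ∈ B₁ ∪ B₂ → a ≠ b → Rel2t E a b := by
    rintro a ha b hb hab
    rcases ha with ha | ha
    case inr =>
      rcases hb with hb | hb
      case inr => exact hB₂.2.1 ha hb hab
      -- a ∈ B₂, b ∈ B₁ : symmetric case, reduce by swapping? handle directly below
      refine ⟨hab, fun w hwa hwb => ?_⟩
      obtain ⟨z, hz, hzw⟩ : ∃ z, z ∈ B₁ ∩ B₂ ∧ z ≠ w := by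
        by_cases hxw : x = w
        · exact ⟨y, hy, fun h => hxy (hxw.trans h.symm)⟩
        · exact ⟨x, hx, hxw⟩
      by_cases hza : z = a
      · exact ((hB₁.2.1 (hza ▸ hz.1) hb hab).2 w hwa hwb)
      · by_cases hzb : z = b
        · exact ((hB₂.2.1 ha (hzb ▸ hz.2) hab).2 w hwa hwb)
        · have h1 := (hB₂.2.1 ha hz.2 (fun h => hza h.symm)).2 w hwa (fun h => hzw h.symm)
          have h2 := (hB₁.2.1 hz.1 hb hzb).2 w (fun h => hzw h.symm) hwb
          exact sameTSCC_trans E h1 h2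
    rcases hb with hb | hb
    case inl => exact hB₁.2.1 ha hb hab
    refine ⟨hab, fun w hwa hwb => ?_⟩
    obtain ⟨z, hz, hzw⟩ : ∃ z, z ∈ B₁ ∩ B₂ ∧ z ≠ w := by
      by_cases hxw : x = w
      · exact ⟨y, hy, fun h => hxy (hxw.trans h.symm)⟩
      · exact ⟨x, hx, hxw⟩
    by_cases hza : z = a
    · exact ((hB₂.2.1 (hza ▸ hz.2) hb hab).2 w hwa hwb)
    · by_cases hzb : z = b
      · exact ((hB₁.2.1 ha (hzb ▸ hz.1) hab).2 w hwa hwb)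
      · have h1 := (hB₁.2.1 ha hz.1 (fun h => hza h.symm)).2 w hwa (fun h => hzw h.symm)
        have h2 := (hB₂.2.1 hz.2 hb hzb).2 w (fun h => hzw h.symm) hwb
        exact sameTSCC_trans E h1 h2
  have e₁ : B₁ ∪ B₂ = B₁ := hB₁.2.2 _ Set.subset_union_left key
  have e₂ : B₁ ∪ B₂ = B₂ := hB₂.2.2 _ Set.subset_union_right key
  exact hne (e₁ ▸ e₂)
end

section
/- Let G=(V,E) be a twinless strongly connected directed graph and let x, y be distinct vertices of G. Then x ≈ y if and only if for every twinless articulation point z of G with z ∈ V∖{x,y}, the vertices x and y lie in the same twinless strongly connected component of G∖{z}. -/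
lemma twinlessSCOn_singleton {V : Type*} (E : V → V → Prop) (v : V) :
    TwinlessSCOn E {v} := by
  refine ⟨fun _ _ => False, by simp, by simp, ?_⟩
  intro a ha b hb
  rw [Set.mem_singleton_iff] at ha hb
  subst ha; subst hb; exact Relation.ReflTransGen.refl

lemma exists_TSCC_mem {V : Type*} [Fintype V] (E : V → V → Prop) (S : Set V)
    (v : V) (hv : v ∈ S) : ∃ C : Set V, IsTSCCWithin E S C ∧ v ∈ C := by
  have hfin : ({D : Set V | v ∈ D ∧ D ⊆ S ∧ TwinlessSCOn E D}).Finite :=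
    Set.toFinite _
  have hne : ({D : Set V | v ∈ D ∧ D ⊆ S ∧ TwinlessSCOn E D}).Nonempty :=
    ⟨{v}, rfl, by simpa using hv, twinlessSCOn_singleton E v⟩
  obtain ⟨C, hC, hmax⟩ := Set.Finite.exists_maximalFor id _ hfin hne
  obtain ⟨hvC, hCS, hT⟩ := hC
  refine ⟨C, ⟨hCS, hT, ?_⟩, hvC⟩
  intro D hCD hDS hDT
  exact Set.Subset.antisymm (hmax ⟨hCD hvC, hDS, hDT⟩ hCD) hCD

lemma univ_is_only_TSCC {V : Type*} (E : V → V → Prop)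
    (hG : TwinlessSCOn E Set.univ) :
    {C : Set V | IsTSCCWithin E Set.univ C} = {Set.univ} := by
  ext C
  simp only [Set.mem_setOf_eq, Set.mem_singleton_iff]
  constructor
  · rintro ⟨hCS, _, hmax⟩
    exact (hmax Set.univ (Set.subset_univ _) (Set.subset_univ _) hG).symm
  · rintro rfl
    exact ⟨Set.Subset.rfl, hG, fun D hD hD' _ =>
      Set.Subset.antisymm hD' hD⟩

/-- For distinct vertices `x, y` of a twinless strongly connected graph `G`:
`x ≈ y` if and only if for every twinless articulation point `z ∉ {x, y}` of `G`,
the vertices `x` and `y` lie in the same twinless strongly connected component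
of `G ∖ {z}`. -/
theorem rel2t_iff_sameTSCC_for_all_twinless_articulation_points
    {V : Type*} [Fintype V] (E : V → V → Prop)
    (hG : TwinlessSCOn E Set.univ)
    (x y : V) (hxy : x ≠ y) :
    Rel2t E x y ↔
      ∀ z : V, IsTwinlessArticulationPoint E z → z ≠ x → z ≠ y →
        SameTSCC E (({z} : Set V)ᶜ) x y := by
  constructor
  · rintro ⟨_, h⟩ z _ hzx hzy
    exact h z hzx hzy
  · intro h
    refine ⟨hxy, fun w hwx hwy => ?_⟩
    by_cases hart : IsTwinlessArticulationPoint E w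
    · exact h w hart hwx hwy
    · -- w is not an articulation point: at most one TSCC in G ∖ {w}
      have hcard : ({C : Set V | IsTSCCWithin E (({w} : Set V)ᶜ) C}).ncard ≤ 1 := by
        have h1 : ({C : Set V | IsTSCCWithin E Set.univ C}).ncard = 1 := by
          rw [univ_is_only_TSCC E hG]; simp
        unfold IsTwinlessArticulationPoint at hart
        omega
      have hx : x ∈ (({w} : Set V)ᶜ) := by simpa using hwx.symm
      have hy : y ∈ (({w} : Set V)ᶜ) := by simpa using hwy.symm
      obtain ⟨Cx, hCx, hxCx⟩ := exists_TSCC_mem E _ x hx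
      obtain ⟨Cy, hCy, hyCy⟩ := exists_TSCC_mem E _ y hy
      have hEq : Cx = Cy := by
        by_contra hne
        have : 1 < ({C : Set V | IsTSCCWithin E (({w} : Set V)ᶜ) C}).ncard :=
          Set.one_lt_ncard (Set.toFinite _) |>.mpr ⟨Cx, hCx, Cy, hCy, hne⟩
        omega
      exact ⟨Cx, hCx, hxCx, hEq ▸ hyCy⟩
end

section
/- Let G=(V,E) be a twinless strongly connected directed graph and let B_t be a 2-twinless block of G. Then B_t is contained in some 2-strong block of G. -/
lemma twinlessSCOn_sc {V : Type*} {E : V → V → Prop} {C : Set V}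
    (h : TwinlessSCOn E C) : StronglyConnectedOn E C := by
  obtain ⟨E', hsub, -, hsc⟩ := h
  intro x hx y hy
  exact Relation.ReflTransGen.mono
    (show restrictEdges E' C ≤ restrictEdges E C from
      fun a b hab => ⟨(hsub a b hab.1).1, hab.2⟩) _ _ (hsc hx hy)

lemma exists_scc {V : Type*} [Fintype V] {E : V → V → Prop} {S C : Set V}
    (hCS : C ⊆ S) (hC : StronglyConnectedOn E C) :
    ∃ M, IsSCCWithin E S M ∧ C ⊆ M := by
  have hfin : {D : Set V | C ⊆ D ∧ D ⊆ S ∧ StronglyConnectedOn E D}.Finite :=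
    Set.toFinite _
  obtain ⟨M, hM, hmax⟩ := hfin.exists_maximalFor id _ ⟨C, subset_rfl, hCS, hC⟩
  obtain ⟨hCM, hMS, hMsc⟩ := hM
  refine ⟨M, ⟨hMS, hMsc, fun D hMD hDS hDsc => ?_⟩, hCM⟩
  exact le_antisymm (hmax ⟨hCM.trans hMD, hDS, hDsc⟩ hMD) hMD

lemma rel2t_to_rel2s {V : Type*} [Fintype V] {E : V → V → Prop} {x y : V}
    (h : Rel2t E x y) : Rel2s E x y := by
  refine ⟨h.1, fun w hwx hwy => ?_⟩
  obtain ⟨C, ⟨hCS, hCt, -⟩, hx, hy⟩ := h.2 w hwx hwy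
  obtain ⟨M, hM, hCM⟩ := exists_scc hCS (twinlessSCOn_sc hCt)
  exact ⟨M, hM, hCM hx, hCM hy⟩

/-- Every 2-twinless block of a twinless strongly connected directed graph is
contained in some 2-strong block. -/
theorem two_twinless_block_subset_two_strong_block
    {V : Type*} [Fintype V] (E : V → V → Prop)
    (hG : TwinlessSCOn E Set.univ)
    (Bt : Set V) (hBt : Is2TwinlessBlock E Bt) :
    ∃ Bs : Set V, Is2StrongBlock E Bs ∧ Bt ⊆ Bs := by
  have hfin : {D : Set V | Bt ⊆ D ∧
      ∀ ⦃x⦄, x ∈ D → ∀ ⦃y⦄, y ∈ D → x ≠ y → Rel2s E x y}.Finite := Set.toFinite _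
  have hBtmem : Bt ∈ {D : Set V | Bt ⊆ D ∧
      ∀ ⦃x⦄, x ∈ D → ∀ ⦃y⦄, y ∈ D → x ≠ y → Rel2s E x y} :=
    ⟨subset_rfl, fun x hx y hy hxy => rel2t_to_rel2s (hBt.2.1 hx hy hxy)⟩
  obtain ⟨M, hM, hmax⟩ := hfin.exists_maximalFor id _ ⟨Bt, hBtmem⟩
  obtain ⟨hBtM, hMrel⟩ := hM
  refine ⟨M, ⟨hBt.1.mono hBtM, hMrel, fun D hMD hDrel => ?_⟩, hBtM⟩
  exact le_antisymm (hmax ⟨hBtM.trans hMD, hDrel⟩ hMD) hMD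
end
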